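/- For c ∈ ℂ, let p_c : ℂ → ℂ be the quadratic polynomial p_c(z) = z² + c, and let p_c^[n] denote its n-th iterate. Let g ∈ ℝ and suppose that ‖p_c^[n](c)‖ → ∞ as n → ∞ and that 2^{−n} · Real.log ‖p_c^[n](c)‖ → g as n → ∞. Then 2^{−n} · Real.log ‖(deriv (p_c^[n]))(c)‖ → g as n → ∞. -/

import Mathlib

open Filter Finset Asymptotics

theorem stmt_14 (c : ℂ) (p : ℂ → ℂ) (hp : ∀ z : ℂ, p z = z ^ 2 + c) (g : ℝ)
    (hesc : Tendsto (fun n : ℕ => ‖p^[n] c‖) atTop atTop)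
    (hgreen : Tendsto (fun n : ℕ => ((2 : ℝ) ^ n)⁻¹ * Real.log ‖p^[n] c‖) atTop (nhds g)) :
    Tendsto (fun n : ℕ => ((2 : ℝ) ^ n)⁻¹ * Real.log ‖deriv (p^[n]) c‖) atTop (nhds g) := by
  have hpe : p = fun z => z ^ 2 + c := funext hp
  -- the orbit never hits 0
  have hnz : ∀ k : ℕ, p^[k] c ≠ 0 := by
    intro m hm
    have hc : p^[m + 1] c = c := by
      rw [Function.iterate_succ_apply', hm, hp]; simp
    have hper : Function.Periodic (fun n : ℕ => p^[n] c) (m + 1) := by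
      intro k
      simp only [Function.iterate_add_apply, hc]
    obtain ⟨B, hB⟩ : ∃ B, ∀ k ∈ Finset.range (m + 1), ‖p^[k] c‖ ≤ B :=
      ⟨(Finset.range (m + 1)).sup' ⟨0, by simp⟩ (fun k => ‖p^[k] c‖),
        fun k hk => Finset.le_sup' (fun k => ‖p^[k] c‖) hk⟩
    obtain ⟨n, hn⟩ := (hesc.eventually_gt_atTop B).exists
    have heq : ‖p^[n % (m + 1)] c‖ = ‖p^[n] c‖ := by
      rw [hper.map_mod_nat n]
    have hle : ‖p^[n % (m + 1)] c‖ ≤ B :=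
      hB _ (Finset.mem_range.mpr (Nat.mod_lt _ (Nat.succ_pos m)))
    rw [heq] at hle
    exact absurd hn (not_lt.mpr hle)
  have hdp : Differentiable ℂ p := by
    rw [hpe]; exact (differentiable_pow 2).add_const c
  have hdn : ∀ n, Differentiable ℂ (p^[n]) := fun n => hdp.iterate n
  have hdp' : ∀ z : ℂ, deriv p z = 2 * z := by
    intro z
    rw [hpe]
    simp [deriv_add_const, mul_comm]
  have hderiv : ∀ n : ℕ, deriv (p^[n]) c = 2 ^ n * ∏ k ∈ Finset.range n, p^[k] c := by
    intro n
    induction n with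
    | zero => simp
    | succ n ih =>
      rw [Function.iterate_succ', deriv_comp _ hdp.differentiableAt (hdn n).differentiableAt,
        hdp', ih, Finset.prod_range_succ]
      ring
  have hlog : ∀ n : ℕ, Real.log ‖deriv (p^[n]) c‖
      = n * Real.log 2 + ∑ k ∈ Finset.range n, Real.log ‖p^[k] c‖ := by
    intro n
    have h2 : ‖(2 : ℂ)‖ = (2 : ℝ) := by simp
    have hprodnz : ∏ k ∈ Finset.range n, ‖p^[k] c‖ ≠ 0 :=
      Finset.prod_ne_zero_iff.mpr fun k _ => norm_ne_zero_iff.mpr (hnz k)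
    rw [hderiv, norm_mul, norm_pow, norm_prod, h2,
      Real.log_mul (by positivity) hprodnz, Real.log_pow,
      Real.log_prod (fun k _ => norm_ne_zero_iff.mpr (hnz k))]
  -- abbreviations
  set L : ℕ → ℝ := fun k => Real.log ‖p^[k] c‖ with hL
  set f : ℕ → ℝ := fun k => ((2 : ℝ) ^ k)⁻¹ * L k - g with hf
  have hfz : Tendsto f atTop (nhds 0) := by
    simpa using hgreen.sub_const g
  -- geometric sum identity
  have hgeom : ∀ n : ℕ, ∑ i ∈ Finset.range n, (2 : ℝ) ^ i = 2 ^ n - 1 := by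
    intro n
    rw [geom_sum_eq (by norm_num : (2 : ℝ) ≠ 1)]
    norm_num
  have h2pow : ∀ n : ℕ, ((2 : ℝ) ^ n) ≠ 0 := fun n => by positivity
  -- little-o estimates
  have hfo : (fun k => (2 : ℝ) ^ k * f k) =o[atTop] (fun k => (2 : ℝ) ^ k) := by
    have h1 : f =o[atTop] (fun _ : ℕ => (1 : ℝ)) := (isLittleO_one_iff ℝ).2 hfz
    have := (isBigO_refl (fun k : ℕ => (2 : ℝ) ^ k) atTop).mul_isLittleO h1
    simpa using this
  have h'g : Tendsto (fun n : ℕ => ∑ i ∈ Finset.range n, (2 : ℝ) ^ i) atTop atTop := by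
    have : Tendsto (fun n : ℕ => (2 : ℝ) ^ n - 1) atTop atTop :=
      tendsto_atTop_add_const_right _ (-1) (tendsto_pow_atTop_atTop_of_one_lt (by norm_num))
    exact this.congr fun n => (hgeom n).symm
  have hSo : (fun n => ∑ i ∈ Finset.range n, (2 : ℝ) ^ i * f i)
      =o[atTop] (fun n => (2 : ℝ) ^ n) := by
    refine (hfo.sum_range (fun i => by positivity) h'g).trans_isBigO ?_
    refine isBigO_of_le _ fun n => ?_
    rw [hgeom]
    have h1 : (0 : ℝ) ≤ 2 ^ n - 1 := by
      rw [← hgeom n]; positivity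
    rw [Real.norm_of_nonneg h1, Real.norm_of_nonneg (by positivity)]
    linarith
  have T2 : Tendsto (fun n : ℕ => (∑ i ∈ Finset.range n, (2 : ℝ) ^ i * f i) * ((2 : ℝ) ^ n)⁻¹)
      atTop (nhds 0) := by
    have := hSo.tendsto_div_nhds_zero
    simpa [div_eq_mul_inv] using this
  have T1 : Tendsto (fun n : ℕ => (n : ℝ) * Real.log 2 * ((2 : ℝ) ^ n)⁻¹) atTop (nhds 0) := by
    have h := (tendsto_pow_const_div_const_pow_of_one_lt 1 (by norm_num : (1 : ℝ) < 2)).const_mul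
      (Real.log 2)
    simp only [pow_one, mul_zero] at h
    refine h.congr fun n => ?_
    rw [div_eq_mul_inv]; ring
  have T3 : Tendsto (fun n : ℕ => g * (1 - ((2 : ℝ) ^ n)⁻¹)) atTop (nhds g) := by
    have hi : Tendsto (fun n : ℕ => ((2 : ℝ) ^ n)⁻¹) atTop (nhds 0) :=
      tendsto_inv_atTop_zero.comp (tendsto_pow_atTop_atTop_of_one_lt (by norm_num))
    have hsub : Tendsto (fun n : ℕ => (1 : ℝ) - ((2 : ℝ) ^ n)⁻¹) atTop (nhds (1 - 0)) :=
      tendsto_const_nhds.sub hi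
    have := hsub.const_mul g
    simpa using this
  have hkey : Tendsto (fun n : ℕ => (n : ℝ) * Real.log 2 * ((2 : ℝ) ^ n)⁻¹
      + ((∑ i ∈ Finset.range n, (2 : ℝ) ^ i * f i) * ((2 : ℝ) ^ n)⁻¹
        + g * (1 - ((2 : ℝ) ^ n)⁻¹))) atTop (nhds g) := by
    have := T1.add (T2.add T3)
    simpa using this
  refine hkey.congr fun n => ?_
  have hsum : ∑ k ∈ Finset.range n, L k
      = (∑ i ∈ Finset.range n, (2 : ℝ) ^ i * f i) + g * (2 ^ n - 1) := by
    rw [← hgeom, Finset.mul_sum, ← Finset.sum_add_distrib]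
    refine Finset.sum_congr rfl fun k _ => ?_
    rw [hf]
    field_simp
    try ring
  rw [hlog, hsum]
  have h2n := h2pow n
  field_simp
  try ring
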